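/- Let Q(s) = s²² − s²⁰ − s¹⁹ − s¹⁷ + s¹⁵ + s¹⁴ − s¹³ − s¹² − s¹⁰ − s⁹ + s⁸ + s⁷ − s⁵ − s³ − s² + 1, and let λ be its largest real root (so 1.400618 < λ < 1.400619). Then every complex root ρ of Q satisfies 1/λ ≤ |ρ| ≤ λ; in particular the smallest modulus among the roots of Q equals 1/λ and is attained at the real root 1/λ, and the largest modulus equals λ. -/

import Mathlib

open Polynomial

/-- The degree-22 integer polynomial `Q` governing the entropy of the `P⁴` map. -/
noncomputable def Qpoly : Polynomial ℤ :=
  X ^ 22 - X ^ 20 - X ^ 19 - X ^ 17 + X ^ 15 + X ^ 14 - X ^ 13 - X ^ 12 - X ^ 10 - X ^ 9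
    + X ^ 8 + X ^ 7 - X ^ 5 - X ^ 3 - X ^ 2 + 1

/-- The "trace polynomial" of `Qpoly`: `Q(s) = s^11 * p(s + 1/s)`, over `ℂ`. -/
noncomputable def pC : Polynomial ℂ :=
  X ^ 11 - 12 * X ^ 9 - X ^ 8 + 53 * X ^ 7 + 7 * X ^ 6 - 104 * X ^ 5 - 13 * X ^ 4
    + 86 * X ^ 3 + 2 * X ^ 2 - 24 * X + 4

/-- The trace polynomial over `ℝ`. -/
noncomputable def pR : Polynomial ℝ :=
  X ^ 11 - 12 * X ^ 9 - X ^ 8 + 53 * X ^ 7 + 7 * X ^ 6 - 104 * X ^ 5 - 13 * X ^ 4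
    + 86 * X ^ 3 + 2 * X ^ 2 - 24 * X + 4

lemma key_identity (s : ℂ) (hs : s ≠ 0) :
    (aeval s) Qpoly = s ^ 11 * pC.eval (s + s⁻¹) := by
  have hs1 : s * s⁻¹ = 1 := mul_inv_cancel₀ hs
  simp only [Qpoly, pC, map_add, map_sub, map_pow, map_one, aeval_X, map_ofNat,
    eval_add, eval_sub, eval_pow, eval_mul, eval_X, eval_ofNat]
  linear_combination (-(((11 : ℂ) * s ^ 20 + (55 : ℂ) * s ^ 19 * s⁻¹ + (165 : ℂ) * s ^ 18 * s⁻¹ ^ 2 + (-53 : ℂ) * s ^ 18 + (330 : ℂ) * s ^ 17 * s⁻¹ ^ 3 + (-267 : ℂ) * s ^ 17 * s⁻¹ + (-8 : ℂ) * s ^ 17 + (462 : ℂ) * s ^ 16 * s⁻¹ ^ 4 + (-678 : ℂ) * s ^ 16 * s⁻¹ ^ 2 + (-28 : ℂ) * s ^ 16 * s⁻¹ + (104 : ℂ) * s ^ 16 + (462 : ℂ) * s ^ 15 * s⁻¹ ^ 5 + (-1050 : ℂ) * s ^ 15 * s⁻¹ ^ 3 + (-56 : ℂ) * s ^ 15 *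 s⁻¹ ^ 2 + (435 : ℂ) * s ^ 15 * s⁻¹ + (14 : ℂ) * s ^ 15 + (330 : ℂ) * s ^ 14 * s⁻¹ ^ 6 + (-1050 : ℂ) * s ^ 14 * s⁻¹ ^ 4 + (-70 : ℂ) * s ^ 14 * s⁻¹ ^ 3 + (805 : ℂ) * s ^ 14 * s⁻¹ ^ 2 + (49 : ℂ) * s ^ 14 * s⁻¹ + (-85 : ℂ) * s ^ 14 + (165 : ℂ) * s ^ 13 * s⁻¹ ^ 7 + (-678 : ℂ) * s ^ 13 * s⁻¹ ^ 5 + (-56 : ℂ) * s ^ 13 * s⁻¹ ^ 4 + (805 : ℂ) * s ^ 13 * s⁻¹ ^ 3 + (70 : ℂ) * s ^ 13 * s⁻¹ ^ 2 + (-235 : ℂ) * s ^ 13 * s⁻¹ + (-3 : ℂ) * s ^ 13 + (55 : ℂ) * s ^ 12 * s⁻¹ ^ 8 + (-267 : ℂ) * s ^ 12 * s⁻¹ ^ 6 + (-28 : ℂ) * s ^ 12 * s⁻¹ ^ 5 + (435 : ℂ) * s ^ 12 * s⁻¹ ^ 4 + (49 : ℂ) * s ^ 12 * s⁻¹ ^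 3 + (-235 : ℂ) * s ^ 12 * s⁻¹ ^ 2 + (-8 : ℂ) * s ^ 12 * s⁻¹ + (23 : ℂ) * s ^ 12 + (11 : ℂ) * s ^ 11 * s⁻¹ ^ 9 + (-53 : ℂ) * s ^ 11 * s⁻¹ ^ 7 + (-8 : ℂ) * s ^ 11 * s⁻¹ ^ 6 + (104 : ℂ) * s ^ 11 * s⁻¹ ^ 5 + (14 : ℂ) * s ^ 11 * s⁻¹ ^ 4 + (-85 : ℂ) * s ^ 11 * s⁻¹ ^ 3 + (-3 : ℂ) * s ^ 11 * s⁻¹ ^ 2 + (23 : ℂ) * s ^ 11 * s⁻¹ + (-4 : ℂ) * s ^ 11 + (1 : ℂ) * s ^ 10 * s⁻¹ ^ 10 + (-1 : ℂ) * s ^ 10 * s⁻¹ ^ 8 + (-1 : ℂ) * s ^ 10 * s⁻¹ ^ 7 + (-1 : ℂ) * s ^ 10 * s⁻¹ ^ 5 + (1 : ℂ) * s ^ 10 * s⁻¹ ^ 3 + (1 : ℂ) * s ^ 10 * s⁻¹ ^ 2 + (-1 : ℂ) * s ^ 10 * s⁻¹ + (-1 : ℂ) * s ^ 10 + (1 :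 ℂ) * s ^ 9 * s⁻¹ ^ 9 + (-1 : ℂ) * s ^ 9 * s⁻¹ ^ 7 + (-1 : ℂ) * s ^ 9 * s⁻¹ ^ 6 + (-1 : ℂ) * s ^ 9 * s⁻¹ ^ 4 + (1 : ℂ) * s ^ 9 * s⁻¹ ^ 2 + (1 : ℂ) * s ^ 9 * s⁻¹ + (-1 : ℂ) * s ^ 9 + (1 : ℂ) * s ^ 8 * s⁻¹ ^ 8 + (-1 : ℂ) * s ^ 8 * s⁻¹ ^ 6 + (-1 : ℂ) * s ^ 8 * s⁻¹ ^ 5 + (-1 : ℂ) * s ^ 8 * s⁻¹ ^ 3 + (1 : ℂ) * s ^ 8 * s⁻¹ + (1 : ℂ) * s ^ 8 + (1 : ℂ) * s ^ 7 * s⁻¹ ^ 7 + (-1 : ℂ) * s ^ 7 * s⁻¹ ^ 5 + (-1 : ℂ) * s ^ 7 * s⁻¹ ^ 4 + (-1 : ℂ) * s ^ 7 * s⁻¹ ^ 2 + (1 : ℂ) * s ^ 7 + (1 : ℂ) * s ^ 6 * s⁻¹ ^ 6 + (-1 : ℂ) * s ^ 6 * s⁻¹ ^ 4 + (-1 : ℂ)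 * s ^ 6 * s⁻¹ ^ 3 + (-1 : ℂ) * s ^ 6 * s⁻¹ + (1 : ℂ) * s ^ 5 * s⁻¹ ^ 5 + (-1 : ℂ) * s ^ 5 * s⁻¹ ^ 3 + (-1 : ℂ) * s ^ 5 * s⁻¹ ^ 2 + (-1 : ℂ) * s ^ 5 + (1 : ℂ) * s ^ 4 * s⁻¹ ^ 4 + (-1 : ℂ) * s ^ 4 * s⁻¹ ^ 2 + (-1 : ℂ) * s ^ 4 * s⁻¹ + (1 : ℂ) * s ^ 3 * s⁻¹ ^ 3 + (-1 : ℂ) * s ^ 3 * s⁻¹ + (-1 : ℂ) * s ^ 3 + (1 : ℂ) * s ^ 2 * s⁻¹ ^ 2 + (-1 : ℂ) * s ^ 2 + (1 : ℂ) * s * s⁻¹ + (1 : ℂ) * 1))) * hs1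

lemma pC_eval_real (r : ℝ) : pC.eval (r : ℂ) = ((pR.eval r : ℝ) : ℂ) := by
  simp only [pC, pR, eval_add, eval_sub, eval_pow, eval_mul, eval_X, eval_ofNat]
  push_cast
  ring

lemma pC_eval_conj (z : ℂ) :
    pC.eval ((starRingEnd ℂ) z) = (starRingEnd ℂ) (pC.eval z) := by
  simp only [pC, eval_add, eval_sub, eval_pow, eval_mul, eval_X, eval_ofNat,
    map_add, map_sub, map_mul, map_pow, map_ofNat]

lemma pC_monic : pC.Monic := by unfold pC; monicity!

lemma pC_natDegree : pC.natDegree = 11 := by unfold pC; compute_degree!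

lemma pC_nextCoeff : pC.nextCoeff = 0 := by
  rw [nextCoeff, pC_natDegree]
  simp only [pC]
  simp [coeff_X_pow, coeff_one, coeff_X]

lemma pC_coeff_zero : pC.coeff 0 = 4 := by
  simp only [pC]
  simp [coeff_X_pow, coeff_one, coeff_X]

lemma pC_splits : pC.Splits := IsAlgClosed.splits pC

lemma pC_roots_card : pC.roots.card = 11 := by
  rw [splits_iff_card_roots.mp pC_splits, pC_natDegree]

lemma pC_roots_sum : pC.roots.sum = 0 := by
  have := pC_splits.nextCoeff_eq_neg_sum_roots_of_monic pC_monic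
  rw [pC_nextCoeff] at this
  linear_combination this

lemma pC_roots_prod : pC.roots.prod = -4 := by
  have := pC_splits.coeff_zero_eq_prod_roots_of_monic pC_monic
  rw [pC_coeff_zero, pC_natDegree] at this
  have h2 : ((-1 : ℂ)) ^ (11 : ℕ) = -1 := by norm_num
  rw [h2] at this
  linear_combination this

lemma root_between_pos_neg (a b : ℝ) (hab : a ≤ b) (ha : 0 < pR.eval a) (hb : pR.eval b < 0) :
    ∃ x, a < x ∧ x < b ∧ pR.eval x = 0 := by
  have h0 : (0 : ℝ) ∈ Set.Ioo (pR.eval b) (pR.eval a) := ⟨hb, ha⟩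
  obtain ⟨x, hx, hx0⟩ := intermediate_value_Ioo' hab (pR.continuous_aeval).continuousOn h0
  exact ⟨x, hx.1, hx.2, hx0⟩

lemma root_between_neg_pos (a b : ℝ) (hab : a ≤ b) (ha : pR.eval a < 0) (hb : 0 < pR.eval b) :
    ∃ x, a < x ∧ x < b ∧ pR.eval x = 0 := by
  have h0 : (0 : ℝ) ∈ Set.Ioo (pR.eval a) (pR.eval b) := ⟨ha, hb⟩
  obtain ⟨x, hx, hx0⟩ := intermediate_value_Ioo hab (pR.continuous_aeval).continuousOn h0
  exact ⟨x, hx.1, hx.2, hx0⟩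
lemma ex_r1 : ∃ x, (-(195887 / 100000) : ℝ) < x ∧ x < (-(48971 / 25000) : ℝ) ∧ pR.eval x = 0 := by
  apply root_between_neg_pos _ _ (by norm_num)
  · show pR.eval (-(195887 / 100000) : ℝ) < 0
    simp only [pR, eval_add, eval_sub, eval_pow, eval_mul, eval_X, eval_ofNat]
    norm_num
  · show pR.eval (-(48971 / 25000) : ℝ) > 0
    simp only [pR, eval_add, eval_sub, eval_pow, eval_mul, eval_X, eval_ofNat]
    norm_num

lemma ex_r2 : ∃ x, (-(7449 / 6250) : ℝ) < x ∧ x < (-(119181 / 100000) : ℝ) ∧ pR.eval x = 0 := by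
  apply root_between_pos_neg _ _ (by norm_num)
  · show pR.eval (-(7449 / 6250) : ℝ) > 0
    simp only [pR, eval_add, eval_sub, eval_pow, eval_mul, eval_X, eval_ofNat]
    norm_num
  · show pR.eval (-(119181 / 100000) : ℝ) < 0
    simp only [pR, eval_add, eval_sub, eval_pow, eval_mul, eval_X, eval_ofNat]
    norm_num

lemma ex_r3 : ∃ x, (-(87521 / 100000) : ℝ) < x ∧ x < (-(43759 / 50000) : ℝ) ∧ pR.eval x = 0 := by
  apply root_between_neg_pos _ _ (by norm_num)
  · show pR.eval (-(87521 / 100000) : ℝ) < 0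
    simp only [pR, eval_add, eval_sub, eval_pow, eval_mul, eval_X, eval_ofNat]
    norm_num
  · show pR.eval (-(43759 / 50000) : ℝ) > 0
    simp only [pR, eval_add, eval_sub, eval_pow, eval_mul, eval_X, eval_ofNat]
    norm_num

lemma ex_r4 : ∃ x, (9703 / 50000 : ℝ) < x ∧ x < (19409 / 100000 : ℝ) ∧ pR.eval x = 0 := by
  apply root_between_pos_neg _ _ (by norm_num)
  · show pR.eval (9703 / 50000 : ℝ) > 0
    simp only [pR, eval_add, eval_sub, eval_pow, eval_mul, eval_X, eval_ofNat]
    norm_num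
  · show pR.eval (19409 / 100000 : ℝ) < 0
    simp only [pR, eval_add, eval_sub, eval_pow, eval_mul, eval_X, eval_ofNat]
    norm_num

lemma ex_r5 : ∃ x, (52971 / 100000 : ℝ) < x ∧ x < (26487 / 50000 : ℝ) ∧ pR.eval x = 0 := by
  apply root_between_neg_pos _ _ (by norm_num)
  · show pR.eval (52971 / 100000 : ℝ) < 0
    simp only [pR, eval_add, eval_sub, eval_pow, eval_mul, eval_X, eval_ofNat]
    norm_num
  · show pR.eval (26487 / 50000 : ℝ) > 0
    simp only [pR, eval_add, eval_sub, eval_pow, eval_mul, eval_X, eval_ofNat]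
    norm_num

lemma ex_r6 : ∃ x, (23957 / 25000 : ℝ) < x ∧ x < (95831 / 100000 : ℝ) ∧ pR.eval x = 0 := by
  apply root_between_pos_neg _ _ (by norm_num)
  · show pR.eval (23957 / 25000 : ℝ) > 0
    simp only [pR, eval_add, eval_sub, eval_pow, eval_mul, eval_X, eval_ofNat]
    norm_num
  · show pR.eval (95831 / 100000 : ℝ) < 0
    simp only [pR, eval_add, eval_sub, eval_pow, eval_mul, eval_X, eval_ofNat]
    norm_num

lemma ex_r7 : ∃ x, (85089 / 50000 : ℝ) < x ∧ x < (170181 / 100000 : ℝ) ∧ pR.eval x = 0 := by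
  apply root_between_neg_pos _ _ (by norm_num)
  · show pR.eval (85089 / 50000 : ℝ) < 0
    simp only [pR, eval_add, eval_sub, eval_pow, eval_mul, eval_X, eval_ofNat]
    norm_num
  · show pR.eval (170181 / 100000 : ℝ) > 0
    simp only [pR, eval_add, eval_sub, eval_pow, eval_mul, eval_X, eval_ofNat]
    norm_num

lemma ex_r8 : ∃ x, (19147 / 10000 : ℝ) < x ∧ x < (191473 / 100000 : ℝ) ∧ pR.eval x = 0 := by
  apply root_between_pos_neg _ _ (by norm_num)
  · show pR.eval (19147 / 10000 : ℝ) > 0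
    simp only [pR, eval_add, eval_sub, eval_pow, eval_mul, eval_X, eval_ofNat]
    norm_num
  · show pR.eval (191473 / 100000 : ℝ) < 0
    simp only [pR, eval_add, eval_sub, eval_pow, eval_mul, eval_X, eval_ofNat]
    norm_num

lemma ex_r9 : ∃ x, (211457 / 100000 : ℝ) < x ∧ x < (10573 / 5000 : ℝ) ∧ pR.eval x = 0 := by
  apply root_between_neg_pos _ _ (by norm_num)
  · show pR.eval (211457 / 100000 : ℝ) < 0
    simp only [pR, eval_add, eval_sub, eval_pow, eval_mul, eval_X, eval_ofNat]
    norm_num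
  · show pR.eval (10573 / 5000 : ℝ) > 0
    simp only [pR, eval_add, eval_sub, eval_pow, eval_mul, eval_X, eval_ofNat]
    norm_num
set_option maxHeartbeats 1000000 in
lemma nine_prod_bounds (r1 r2 r3 r4 r5 r6 r7 r8 r9 : ℝ) (ha1 : (-(195887 / 100000) : ℝ) < r1) (hb1 : r1 < (-(48971 / 25000) : ℝ)) (ha2 : (-(7449 / 6250) : ℝ) < r2) (hb2 : r2 < (-(119181 / 100000) : ℝ)) (ha3 : (-(87521 / 100000) : ℝ) < r3) (hb3 : r3 < (-(43759 / 50000) : ℝ)) (ha4 : (9703 / 50000 : ℝ) < r4) (hb4 : r4 < (19409 / 100000 : ℝ)) (ha5 : (52971 / 100000 : ℝ) < r5) (hb5 : r5 < (26487 / 50000 : ℝ)) (ha6 : (23957 / 25000 : ℝ) < r6) (hb6 : r6 < (95831 / 100000 : ℝ)) (ha7 : (85089 / 50000 : ℝ) < r7) (hb7 : r7 < (170181 / 100000 : ℝ)) (ha8 : (19147 / 10000 : ℝ) < r8) (hb8 : r8 < (191473 / 100000 : ℝ)) (ha9 : (211457 / 100000 : ℝ) < r9) (hb9 : r9 < (10573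 / 5000 : ℝ)) :
    (-(277453 / 200000) : ℝ) ≤ r1 * r2 * r3 * r4 * r5 * r6 * r7 * r8 * r9 ∧
      r1 * r2 * r3 * r4 * r5 * r6 * r7 * r8 * r9 ≤ (-(138673 / 100000) : ℝ) := by
  have hQlo : (-(195887 / 100000) : ℝ) ≤ r1 := ha1.le
  have hQhi : r1 ≤ (-(48971 / 25000) : ℝ) := hb1.le
  have hQ2lo : (466913 / 200000 : ℝ) ≤ r1 * r2 := by
    linarith only [mul_nonneg (by linarith only [hQlo] : (0:ℝ) ≤ r1 - (-(195887 / 100000) : ℝ)) (by linarith only [ha2] : (0:ℝ) ≤ r2 - (-(7449 / 6250) : ℝ)),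
        mul_nonneg (by linarith only [hQlo] : (0:ℝ) ≤ r1 - (-(195887 / 100000) : ℝ)) (by linarith only [hb2] : (0:ℝ) ≤ (-(119181 / 100000) : ℝ) - r2),
        mul_nonneg (by linarith only [hQhi] : (0:ℝ) ≤ (-(48971 / 25000) : ℝ) - r1) (by linarith only [ha2] : (0:ℝ) ≤ r2 - (-(7449 / 6250) : ℝ)),
        mul_nonneg (by linarith only [hQhi] : (0:ℝ) ≤ (-(48971 / 25000) : ℝ) - r1) (by linarith only [hb2] : (0:ℝ) ≤ (-(119181 / 100000) : ℝ) - r2), hQlo, hQhi, ha2, hb2]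
  have hQ2hi : r1 * r2 ≤ (116733 / 50000 : ℝ) := by
    linarith only [mul_nonneg (by linarith only [hQlo] : (0:ℝ) ≤ r1 - (-(195887 / 100000) : ℝ)) (by linarith only [ha2] : (0:ℝ) ≤ r2 - (-(7449 / 6250) : ℝ)),
        mul_nonneg (by linarith only [hQlo] : (0:ℝ) ≤ r1 - (-(195887 / 100000) : ℝ)) (by linarith only [hb2] : (0:ℝ) ≤ (-(119181 / 100000) : ℝ) - r2),
        mul_nonneg (by linarith only [hQhi] : (0:ℝ) ≤ (-(48971 / 25000) : ℝ) - r1) (by linarith only [ha2] : (0:ℝ) ≤ r2 - (-(7449 / 6250) : ℝ)),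
        mul_nonneg (by linarith only [hQhi] : (0:ℝ) ≤ (-(48971 / 25000) : ℝ) - r1) (by linarith only [hb2] : (0:ℝ) ≤ (-(119181 / 100000) : ℝ) - r2), hQlo, hQhi, ha2, hb2]
  clear hQlo hQhi
  have hQlo := hQ2lo
  have hQhi := hQ2hi
  clear hQ2lo hQ2hi
  have hQ3lo : (-(1021659 / 500000) : ℝ) ≤ r1 * r2 * r3 := by
    linarith only [mul_nonneg (by linarith only [hQlo] : (0:ℝ) ≤ r1 * r2 - (466913 / 200000 : ℝ)) (by linarith only [ha3] : (0:ℝ) ≤ r3 - (-(87521 / 100000) : ℝ)),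
        mul_nonneg (by linarith only [hQlo] : (0:ℝ) ≤ r1 * r2 - (466913 / 200000 : ℝ)) (by linarith only [hb3] : (0:ℝ) ≤ (-(43759 / 50000) : ℝ) - r3),
        mul_nonneg (by linarith only [hQhi] : (0:ℝ) ≤ (116733 / 50000 : ℝ) - r1 * r2) (by linarith only [ha3] : (0:ℝ) ≤ r3 - (-(87521 / 100000) : ℝ)),
        mul_nonneg (by linarith only [hQhi] : (0:ℝ) ≤ (116733 / 50000 : ℝ) - r1 * r2) (by linarith only [hb3] : (0:ℝ) ≤ (-(43759 / 50000) : ℝ) - r3), hQlo, hQhi, ha3, hb3]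
  have hQ3hi : r1 * r2 * r3 ≤ (-(510791 / 250000) : ℝ) := by
    linarith only [mul_nonneg (by linarith only [hQlo] : (0:ℝ) ≤ r1 * r2 - (466913 / 200000 : ℝ)) (by linarith only [ha3] : (0:ℝ) ≤ r3 - (-(87521 / 100000) : ℝ)),
        mul_nonneg (by linarith only [hQlo] : (0:ℝ) ≤ r1 * r2 - (466913 / 200000 : ℝ)) (by linarith only [hb3] : (0:ℝ) ≤ (-(43759 / 50000) : ℝ) - r3),
        mul_nonneg (by linarith only [hQhi] : (0:ℝ) ≤ (116733 / 50000 : ℝ) - r1 * r2) (by linarith only [ha3] : (0:ℝ) ≤ r3 - (-(87521 / 100000) : ℝ)),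
        mul_nonneg (by linarith only [hQhi] : (0:ℝ) ≤ (116733 / 50000 : ℝ) - r1 * r2) (by linarith only [hb3] : (0:ℝ) ≤ (-(43759 / 50000) : ℝ) - r3), hQlo, hQhi, ha3, hb3]
  clear hQlo hQhi
  have hQlo := hQ3lo
  have hQhi := hQ3hi
  clear hQ3lo hQ3hi
  have hQ4lo : (-(99147 / 250000) : ℝ) ≤ r1 * r2 * r3 * r4 := by
    linarith only [mul_nonneg (by linarith only [hQlo] : (0:ℝ) ≤ r1 * r2 * r3 - (-(1021659 / 500000) : ℝ)) (by linarith only [ha4] : (0:ℝ) ≤ r4 - (9703 / 50000 : ℝ)),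
        mul_nonneg (by linarith only [hQlo] : (0:ℝ) ≤ r1 * r2 * r3 - (-(1021659 / 500000) : ℝ)) (by linarith only [hb4] : (0:ℝ) ≤ (19409 / 100000 : ℝ) - r4),
        mul_nonneg (by linarith only [hQhi] : (0:ℝ) ≤ (-(510791 / 250000) : ℝ) - r1 * r2 * r3) (by linarith only [ha4] : (0:ℝ) ≤ r4 - (9703 / 50000 : ℝ)),
        mul_nonneg (by linarith only [hQhi] : (0:ℝ) ≤ (-(510791 / 250000) : ℝ) - r1 * r2 * r3) (by linarith only [hb4] : (0:ℝ) ≤ (19409 / 100000 : ℝ) - r4), hQlo, hQhi, ha4, hb4]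
  have hQ4hi : r1 * r2 * r3 * r4 ≤ (-(24781 / 62500) : ℝ) := by
    linarith only [mul_nonneg (by linarith only [hQlo] : (0:ℝ) ≤ r1 * r2 * r3 - (-(1021659 / 500000) : ℝ)) (by linarith only [ha4] : (0:ℝ) ≤ r4 - (9703 / 50000 : ℝ)),
        mul_nonneg (by linarith only [hQlo] : (0:ℝ) ≤ r1 * r2 * r3 - (-(1021659 / 500000) : ℝ)) (by linarith only [hb4] : (0:ℝ) ≤ (19409 / 100000 : ℝ) - r4),
        mul_nonneg (by linarith only [hQhi] : (0:ℝ) ≤ (-(510791 / 250000) : ℝ) - r1 * r2 * r3) (by linarith only [ha4] : (0:ℝ) ≤ r4 - (9703 / 50000 : ℝ)),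
        mul_nonneg (by linarith only [hQhi] : (0:ℝ) ≤ (-(510791 / 250000) : ℝ) - r1 * r2 * r3) (by linarith only [hb4] : (0:ℝ) ≤ (19409 / 100000 : ℝ) - r4), hQlo, hQhi, ha4, hb4]
  clear hQlo hQhi
  have hQlo := hQ4lo
  have hQhi := hQ4hi
  clear hQ4lo hQ4hi
  have hQ5lo : (-(210089 / 1000000) : ℝ) ≤ r1 * r2 * r3 * r4 * r5 := by
    linarith only [mul_nonneg (by linarith only [hQlo] : (0:ℝ) ≤ r1 * r2 * r3 * r4 - (-(99147 / 250000) : ℝ)) (by linarith only [ha5] : (0:ℝ) ≤ r5 - (52971 / 100000 : ℝ)),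
        mul_nonneg (by linarith only [hQlo] : (0:ℝ) ≤ r1 * r2 * r3 * r4 - (-(99147 / 250000) : ℝ)) (by linarith only [hb5] : (0:ℝ) ≤ (26487 / 50000 : ℝ) - r5),
        mul_nonneg (by linarith only [hQhi] : (0:ℝ) ≤ (-(24781 / 62500) : ℝ) - r1 * r2 * r3 * r4) (by linarith only [ha5] : (0:ℝ) ≤ r5 - (52971 / 100000 : ℝ)),
        mul_nonneg (by linarith only [hQhi] : (0:ℝ) ≤ (-(24781 / 62500) : ℝ) - r1 * r2 * r3 * r4) (by linarith only [hb5] : (0:ℝ) ≤ (26487 / 50000 : ℝ) - r5), hQlo, hQhi, ha5, hb5]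
  have hQ5hi : r1 * r2 * r3 * r4 * r5 ≤ (-(210027 / 1000000) : ℝ) := by
    linarith only [mul_nonneg (by linarith only [hQlo] : (0:ℝ) ≤ r1 * r2 * r3 * r4 - (-(99147 / 250000) : ℝ)) (by linarith only [ha5] : (0:ℝ) ≤ r5 - (52971 / 100000 : ℝ)),
        mul_nonneg (by linarith only [hQlo] : (0:ℝ) ≤ r1 * r2 * r3 * r4 - (-(99147 / 250000) : ℝ)) (by linarith only [hb5] : (0:ℝ) ≤ (26487 / 50000 : ℝ) - r5),
        mul_nonneg (by linarith only [hQhi] : (0:ℝ) ≤ (-(24781 / 62500) : ℝ) - r1 * r2 * r3 * r4) (by linarith only [ha5] : (0:ℝ) ≤ r5 - (52971 / 100000 : ℝ)),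
        mul_nonneg (by linarith only [hQhi] : (0:ℝ) ≤ (-(24781 / 62500) : ℝ) - r1 * r2 * r3 * r4) (by linarith only [hb5] : (0:ℝ) ≤ (26487 / 50000 : ℝ) - r5), hQlo, hQhi, ha5, hb5]
  clear hQlo hQhi
  have hQlo := hQ5lo
  have hQhi := hQ5hi
  clear hQ5lo hQ5hi
  have hQ6lo : (-(201331 / 1000000) : ℝ) ≤ r1 * r2 * r3 * r4 * r5 * r6 := by
    linarith only [mul_nonneg (by linarith only [hQlo] : (0:ℝ) ≤ r1 * r2 * r3 * r4 * r5 - (-(210089 / 1000000) : ℝ)) (by linarith only [ha6] : (0:ℝ) ≤ r6 - (23957 / 25000 : ℝ)),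
        mul_nonneg (by linarith only [hQlo] : (0:ℝ) ≤ r1 * r2 * r3 * r4 * r5 - (-(210089 / 1000000) : ℝ)) (by linarith only [hb6] : (0:ℝ) ≤ (95831 / 100000 : ℝ) - r6),
        mul_nonneg (by linarith only [hQhi] : (0:ℝ) ≤ (-(210027 / 1000000) : ℝ) - r1 * r2 * r3 * r4 * r5) (by linarith only [ha6] : (0:ℝ) ≤ r6 - (23957 / 25000 : ℝ)),
        mul_nonneg (by linarith only [hQhi] : (0:ℝ) ≤ (-(210027 / 1000000) : ℝ) - r1 * r2 * r3 * r4 * r5) (by linarith only [hb6] : (0:ℝ) ≤ (95831 / 100000 : ℝ) - r6), hQlo, hQhi, ha6, hb6]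
  have hQ6hi : r1 * r2 * r3 * r4 * r5 * r6 ≤ (-(12579 / 62500) : ℝ) := by
    linarith only [mul_nonneg (by linarith only [hQlo] : (0:ℝ) ≤ r1 * r2 * r3 * r4 * r5 - (-(210089 / 1000000) : ℝ)) (by linarith only [ha6] : (0:ℝ) ≤ r6 - (23957 / 25000 : ℝ)),
        mul_nonneg (by linarith only [hQlo] : (0:ℝ) ≤ r1 * r2 * r3 * r4 * r5 - (-(210089 / 1000000) : ℝ)) (by linarith only [hb6] : (0:ℝ) ≤ (95831 / 100000 : ℝ) - r6),
        mul_nonneg (by linarith only [hQhi] : (0:ℝ) ≤ (-(210027 / 1000000) : ℝ) - r1 * r2 * r3 * r4 * r5) (by linarith only [ha6] : (0:ℝ) ≤ r6 - (23957 / 25000 : ℝ)),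
        mul_nonneg (by linarith only [hQhi] : (0:ℝ) ≤ (-(210027 / 1000000) : ℝ) - r1 * r2 * r3 * r4 * r5) (by linarith only [hb6] : (0:ℝ) ≤ (95831 / 100000 : ℝ) - r6), hQlo, hQhi, ha6, hb6]
  clear hQlo hQhi
  have hQlo := hQ6lo
  have hQhi := hQ6hi
  clear hQ6lo hQ6hi
  have hQ7lo : (-(85657 / 250000) : ℝ) ≤ r1 * r2 * r3 * r4 * r5 * r6 * r7 := by
    linarith only [mul_nonneg (by linarith only [hQlo] : (0:ℝ) ≤ r1 * r2 * r3 * r4 * r5 * r6 - (-(201331 / 1000000) : ℝ)) (by linarith only [ha7] : (0:ℝ) ≤ r7 - (85089 / 50000 : ℝ)),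
        mul_nonneg (by linarith only [hQlo] : (0:ℝ) ≤ r1 * r2 * r3 * r4 * r5 * r6 - (-(201331 / 1000000) : ℝ)) (by linarith only [hb7] : (0:ℝ) ≤ (170181 / 100000 : ℝ) - r7),
        mul_nonneg (by linarith only [hQhi] : (0:ℝ) ≤ (-(12579 / 62500) : ℝ) - r1 * r2 * r3 * r4 * r5 * r6) (by linarith only [ha7] : (0:ℝ) ≤ r7 - (85089 / 50000 : ℝ)),
        mul_nonneg (by linarith only [hQhi] : (0:ℝ) ≤ (-(12579 / 62500) : ℝ) - r1 * r2 * r3 * r4 * r5 * r6) (by linarith only [hb7] : (0:ℝ) ≤ (170181 / 100000 : ℝ) - r7), hQlo, hQhi, ha7, hb7]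
  have hQ7hi : r1 * r2 * r3 * r4 * r5 * r6 * r7 ≤ (-(342507 / 1000000) : ℝ) := by
    linarith only [mul_nonneg (by linarith only [hQlo] : (0:ℝ) ≤ r1 * r2 * r3 * r4 * r5 * r6 - (-(201331 / 1000000) : ℝ)) (by linarith only [ha7] : (0:ℝ) ≤ r7 - (85089 / 50000 : ℝ)),
        mul_nonneg (by linarith only [hQlo] : (0:ℝ) ≤ r1 * r2 * r3 * r4 * r5 * r6 - (-(201331 / 1000000) : ℝ)) (by linarith only [hb7] : (0:ℝ) ≤ (170181 / 100000 : ℝ) - r7),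
        mul_nonneg (by linarith only [hQhi] : (0:ℝ) ≤ (-(12579 / 62500) : ℝ) - r1 * r2 * r3 * r4 * r5 * r6) (by linarith only [ha7] : (0:ℝ) ≤ r7 - (85089 / 50000 : ℝ)),
        mul_nonneg (by linarith only [hQhi] : (0:ℝ) ≤ (-(12579 / 62500) : ℝ) - r1 * r2 * r3 * r4 * r5 * r6) (by linarith only [hb7] : (0:ℝ) ≤ (170181 / 100000 : ℝ) - r7), hQlo, hQhi, ha7, hb7]
  clear hQlo hQhi
  have hQlo := hQ7lo
  have hQhi := hQ7hi
  clear hQ7lo hQ7hi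
  have hQ8lo : (-(656041 / 1000000) : ℝ) ≤ r1 * r2 * r3 * r4 * r5 * r6 * r7 * r8 := by
    linarith only [mul_nonneg (by linarith only [hQlo] : (0:ℝ) ≤ r1 * r2 * r3 * r4 * r5 * r6 * r7 - (-(85657 / 250000) : ℝ)) (by linarith only [ha8] : (0:ℝ) ≤ r8 - (19147 / 10000 : ℝ)),
        mul_nonneg (by linarith only [hQlo] : (0:ℝ) ≤ r1 * r2 * r3 * r4 * r5 * r6 * r7 - (-(85657 / 250000) : ℝ)) (by linarith only [hb8] : (0:ℝ) ≤ (191473 / 100000 : ℝ) - r8),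
        mul_nonneg (by linarith only [hQhi] : (0:ℝ) ≤ (-(342507 / 1000000) : ℝ) - r1 * r2 * r3 * r4 * r5 * r6 * r7) (by linarith only [ha8] : (0:ℝ) ≤ r8 - (19147 / 10000 : ℝ)),
        mul_nonneg (by linarith only [hQhi] : (0:ℝ) ≤ (-(342507 / 1000000) : ℝ) - r1 * r2 * r3 * r4 * r5 * r6 * r7) (by linarith only [hb8] : (0:ℝ) ≤ (191473 / 100000 : ℝ) - r8), hQlo, hQhi, ha8, hb8]
  have hQ8hi : r1 * r2 * r3 * r4 * r5 * r6 * r7 * r8 ≤ (-(327899 / 500000) : ℝ) := by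
    linarith only [mul_nonneg (by linarith only [hQlo] : (0:ℝ) ≤ r1 * r2 * r3 * r4 * r5 * r6 * r7 - (-(85657 / 250000) : ℝ)) (by linarith only [ha8] : (0:ℝ) ≤ r8 - (19147 / 10000 : ℝ)),
        mul_nonneg (by linarith only [hQlo] : (0:ℝ) ≤ r1 * r2 * r3 * r4 * r5 * r6 * r7 - (-(85657 / 250000) : ℝ)) (by linarith only [hb8] : (0:ℝ) ≤ (191473 / 100000 : ℝ) - r8),
        mul_nonneg (by linarith only [hQhi] : (0:ℝ) ≤ (-(342507 / 1000000) : ℝ) - r1 * r2 * r3 * r4 * r5 * r6 * r7) (by linarith only [ha8] : (0:ℝ) ≤ r8 - (19147 / 10000 : ℝ)),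
        mul_nonneg (by linarith only [hQhi] : (0:ℝ) ≤ (-(342507 / 1000000) : ℝ) - r1 * r2 * r3 * r4 * r5 * r6 * r7) (by linarith only [hb8] : (0:ℝ) ≤ (191473 / 100000 : ℝ) - r8), hQlo, hQhi, ha8, hb8]
  clear hQlo hQhi
  have hQlo := hQ8lo
  have hQhi := hQ8hi
  clear hQ8lo hQ8hi
  have hQ9lo : (-(277453 / 200000) : ℝ) ≤ r1 * r2 * r3 * r4 * r5 * r6 * r7 * r8 * r9 := by
    linarith only [mul_nonneg (by linarith only [hQlo] : (0:ℝ) ≤ r1 * r2 * r3 * r4 * r5 * r6 * r7 * r8 - (-(656041 / 1000000) : ℝ)) (by linarith only [ha9] : (0:ℝ) ≤ r9 - (211457 / 100000 : ℝ)),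
        mul_nonneg (by linarith only [hQlo] : (0:ℝ) ≤ r1 * r2 * r3 * r4 * r5 * r6 * r7 * r8 - (-(656041 / 1000000) : ℝ)) (by linarith only [hb9] : (0:ℝ) ≤ (10573 / 5000 : ℝ) - r9),
        mul_nonneg (by linarith only [hQhi] : (0:ℝ) ≤ (-(327899 / 500000) : ℝ) - r1 * r2 * r3 * r4 * r5 * r6 * r7 * r8) (by linarith only [ha9] : (0:ℝ) ≤ r9 - (211457 / 100000 : ℝ)),
        mul_nonneg (by linarith only [hQhi] : (0:ℝ) ≤ (-(327899 / 500000) : ℝ) - r1 * r2 * r3 * r4 * r5 * r6 * r7 * r8) (by linarith only [hb9] : (0:ℝ) ≤ (10573 / 5000 : ℝ) - r9), hQlo, hQhi, ha9, hb9]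
  have hQ9hi : r1 * r2 * r3 * r4 * r5 * r6 * r7 * r8 * r9 ≤ (-(138673 / 100000) : ℝ) := by
    linarith only [mul_nonneg (by linarith only [hQlo] : (0:ℝ) ≤ r1 * r2 * r3 * r4 * r5 * r6 * r7 * r8 - (-(656041 / 1000000) : ℝ)) (by linarith only [ha9] : (0:ℝ) ≤ r9 - (211457 / 100000 : ℝ)),
        mul_nonneg (by linarith only [hQlo] : (0:ℝ) ≤ r1 * r2 * r3 * r4 * r5 * r6 * r7 * r8 - (-(656041 / 1000000) : ℝ)) (by linarith only [hb9] : (0:ℝ) ≤ (10573 / 5000 : ℝ) - r9),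
        mul_nonneg (by linarith only [hQhi] : (0:ℝ) ≤ (-(327899 / 500000) : ℝ) - r1 * r2 * r3 * r4 * r5 * r6 * r7 * r8) (by linarith only [ha9] : (0:ℝ) ≤ r9 - (211457 / 100000 : ℝ)),
        mul_nonneg (by linarith only [hQhi] : (0:ℝ) ≤ (-(327899 / 500000) : ℝ) - r1 * r2 * r3 * r4 * r5 * r6 * r7 * r8) (by linarith only [hb9] : (0:ℝ) ≤ (10573 / 5000 : ℝ) - r9), hQlo, hQhi, ha9, hb9]
  clear hQlo hQhi
  have hQlo := hQ9lo
  have hQhi := hQ9hi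
  clear hQ9lo hQ9hi
  exact ⟨hQlo, hQhi⟩
lemma real_pair_absurd (S P x y : ℝ) (hslo : (169359 / 50000 : ℝ) ≤ S)
    (hshi : S ≤ (67749 / 20000 : ℝ)) (hplo : (-(277453 / 200000) : ℝ) ≤ P)
    (hphi : P ≤ (-(138673 / 100000) : ℝ))
    (hsum : S + (x + y) = 0) (hprod : P * (x * y) = -4) : False := by
  have hxypos : 0 < x * y := by
    by_contra hxy
    push_neg at hxy
    nlinarith [mul_nonneg (by linarith : (0:ℝ) ≤ -P) (by linarith : (0:ℝ) ≤ -(x*y))]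
  have hxyb : (277453 / 200000 : ℝ) * (x * y) ≥ 4 := by
    nlinarith [mul_nonneg (by linarith : (0:ℝ) ≤ (277453 / 200000 : ℝ) + P) hxypos.le]
  nlinarith [sq_nonneg (x - y), hxyb, hsum,
    mul_nonneg (by linarith : (0:ℝ) ≤ S - (169359 / 50000 : ℝ))
      (by linarith : (0:ℝ) ≤ (67749 / 20000 : ℝ) - S)]

lemma conj_pair_bounds (S P re im ns : ℝ) (hslo : (169359 / 50000 : ℝ) ≤ S)
    (hshi : S ≤ (67749 / 20000 : ℝ)) (hplo : (-(277453 / 200000) : ℝ) ≤ P)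
    (hphi : P ≤ (-(138673 / 100000) : ℝ))
    (hsum : S + 2 * re = 0) (hprod : P * ns = -4)
    (hns : ns = re ^ 2 + im ^ 2) (hnsnn : 0 ≤ ns) :
    re ^ 2 ≤ 2.87 ∧ im ^ 2 ≤ 0.017 := by
  have hre2 : (2868247 / 1000000 : ℝ) ≤ re ^ 2 := by
    nlinarith [mul_nonneg (by linarith : (0:ℝ) ≤ -(2 * re) - (169359 / 50000 : ℝ))
      (by linarith : (0:ℝ) ≤ -(2 * re) + (169359 / 50000 : ℝ))]
  constructor
  · nlinarith [mul_nonneg (by linarith : (0:ℝ) ≤ -(2 * re) - (169359 / 50000 : ℝ))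
      (by linarith : (0:ℝ) ≤ (67749 / 20000 : ℝ) + 2 * re)]
  · have hnshi : ns * (138673 / 100000 : ℝ) ≤ 4 := by
      nlinarith [mul_nonneg hnsnn (by linarith : (0:ℝ) ≤ -(138673 / 100000 : ℝ) - P)]
    linarith [hns, hre2, hnshi, hnsnn]
set_option maxHeartbeats 2000000 in
lemma classify (τ : ℂ) (hτ : pC.eval τ = 0) :
    (∃ x : ℝ, τ = (x : ℂ) ∧ -2 < x ∧ x < 2) ∨ (∃ x : ℝ, τ = (x : ℂ) ∧ 2 < x) ∨
    ((τ.re) ^ 2 ≤ 2.87 ∧ (τ.im) ^ 2 ≤ 0.017) := by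
  obtain ⟨r1, ha1, hb1, h01⟩ := ex_r1
  obtain ⟨r2, ha2, hb2, h02⟩ := ex_r2
  obtain ⟨r3, ha3, hb3, h03⟩ := ex_r3
  obtain ⟨r4, ha4, hb4, h04⟩ := ex_r4
  obtain ⟨r5, ha5, hb5, h05⟩ := ex_r5
  obtain ⟨r6, ha6, hb6, h06⟩ := ex_r6
  obtain ⟨r7, ha7, hb7, h07⟩ := ex_r7
  obtain ⟨r8, ha8, hb8, h08⟩ := ex_r8
  obtain ⟨r9, ha9, hb9, h09⟩ := ex_r9
  have hmem : ∀ r : ℝ, pR.eval r = 0 → (r : ℂ) ∈ pC.roots := by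
    intro r hr
    rw [mem_roots']
    refine ⟨pC_monic.ne_zero, ?_⟩
    show pC.eval (r : ℂ) = 0
    rw [pC_eval_real, hr]
    simp
  set S : Multiset ℂ :=
    {(r1:ℂ), (r2:ℂ), (r3:ℂ), (r4:ℂ), (r5:ℂ), (r6:ℂ), (r7:ℂ), (r8:ℂ), (r9:ℂ)} with hS
  have hnodup : S.Nodup := by
    simp only [hS, Multiset.insert_eq_cons, Multiset.nodup_cons, Multiset.mem_cons,
      Multiset.mem_singleton, Multiset.nodup_singleton, Complex.ofReal_inj, and_true]
    push_neg
    repeat' apply And.intro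
    all_goals intro h
    all_goals linarith only [h, hb1, ha2, hb2, ha3, hb3, ha4, hb4, ha5, hb5, ha6, hb6, ha7,
      hb7, ha8, hb8, ha9]
  have hsub : S ⊆ pC.roots := by
    intro z hz
    simp only [hS, Multiset.insert_eq_cons, Multiset.mem_cons, Multiset.mem_singleton] at hz
    rcases hz with rfl|rfl|rfl|rfl|rfl|rfl|rfl|rfl|rfl <;> exact hmem _ (by assumption)
  obtain ⟨T, hT⟩ := Multiset.le_iff_exists_add.mp ((Multiset.le_iff_subset hnodup).mpr hsub)
  have hScard : Multiset.card S = 9 := by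
    simp [hS, Multiset.insert_eq_cons]
  have hTcard : Multiset.card T = 2 := by
    have hc := pC_roots_card
    rw [hT, Multiset.card_add, hScard] at hc
    omega
  have hτmem : τ ∈ pC.roots := by
    rw [mem_roots']
    exact ⟨pC_monic.ne_zero, hτ⟩
  rw [hT, Multiset.mem_add] at hτmem
  rcases hτmem with hin | hin
  · simp only [hS, Multiset.insert_eq_cons, Multiset.mem_cons, Multiset.mem_singleton] at hin
    rcases hin with rfl|rfl|rfl|rfl|rfl|rfl|rfl|rfl|rfl
    · exact Or.inl ⟨r1, rfl, by linarith, by linarith⟩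
    · exact Or.inl ⟨r2, rfl, by linarith, by linarith⟩
    · exact Or.inl ⟨r3, rfl, by linarith, by linarith⟩
    · exact Or.inl ⟨r4, rfl, by linarith, by linarith⟩
    · exact Or.inl ⟨r5, rfl, by linarith, by linarith⟩
    · exact Or.inl ⟨r6, rfl, by linarith, by linarith⟩
    · exact Or.inl ⟨r7, rfl, by linarith, by linarith⟩
    · exact Or.inl ⟨r8, rfl, by linarith, by linarith⟩
    · exact Or.inr (Or.inl ⟨r9, rfl, by linarith⟩)
  · obtain ⟨t1, t2, hT2⟩ := Multiset.card_eq_two.mp hTcard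
    rw [hT2] at hin hT
    have hpair : ∃ σ, pC.roots = S + {τ, σ} := by
      simp only [Multiset.insert_eq_cons, Multiset.mem_cons, Multiset.mem_singleton] at hin
      rcases hin with rfl | rfl
      · exact ⟨t2, hT⟩
      · exact ⟨t1, by rw [hT, Multiset.pair_comm]⟩
    obtain ⟨σ, hT'⟩ := hpair
    have hslo : (169359 / 50000 : ℝ) ≤ r1+r2+r3+r4+r5+r6+r7+r8+r9 := by linarith
    have hshi : r1+r2+r3+r4+r5+r6+r7+r8+r9 ≤ (67749 / 20000 : ℝ) := by linarith
    obtain ⟨hplo, hphi⟩ := nine_prod_bounds r1 r2 r3 r4 r5 r6 r7 r8 r9 ha1 hb1 ha2 hb2 ha3 hb3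
      ha4 hb4 ha5 hb5 ha6 hb6 ha7 hb7 ha8 hb8 ha9 hb9
    have hSsum : S.sum = ((r1+r2+r3+r4+r5+r6+r7+r8+r9 : ℝ) : ℂ) := by
      simp only [hS, Multiset.insert_eq_cons, Multiset.sum_cons, Multiset.sum_singleton]
      push_cast
      ring
    have hSprod : S.prod = ((r1 * r2 * r3 * r4 * r5 * r6 * r7 * r8 * r9 : ℝ) : ℂ) := by
      simp only [hS, Multiset.insert_eq_cons, Multiset.prod_cons, Multiset.prod_singleton]
      push_cast
      ring
    have hsumC : S.sum + (τ + σ) = 0 := by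
      have h' := pC_roots_sum
      rw [hT'] at h'
      simp only [Multiset.sum_add, Multiset.insert_eq_cons, Multiset.sum_cons,
        Multiset.sum_singleton] at h'
      linear_combination h'
    have hprodC : S.prod * (τ * σ) = -4 := by
      have h' := pC_roots_prod
      rw [hT'] at h'
      simp only [Multiset.prod_add, Multiset.insert_eq_cons, Multiset.prod_cons,
        Multiset.prod_singleton] at h'
      linear_combination h'
    have hconjτ : (starRingEnd ℂ) τ ∈ pC.roots := by
      rw [mem_roots']
      refine ⟨pC_monic.ne_zero, ?_⟩
      show pC.eval ((starRingEnd ℂ) τ) = 0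
      rw [pC_eval_conj, hτ, map_zero]
    rw [hT', Multiset.mem_add] at hconjτ
    rcases hconjτ with hcin | hcin
    · simp only [hS, Multiset.insert_eq_cons, Multiset.mem_cons, Multiset.mem_singleton] at hcin
      rcases hcin with hcin|hcin|hcin|hcin|hcin|hcin|hcin|hcin|hcin
      · have hτr : τ = ((r1 : ℝ) : ℂ) := by
          rw [← Complex.conj_conj τ, hcin, Complex.conj_ofReal]
        exact Or.inl ⟨r1, hτr, by linarith, by linarith⟩
      · have hτr : τ = ((r2 : ℝ) : ℂ) := by
          rw [← Complex.conj_conj τ, hcin, Complex.conj_ofReal]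
        exact Or.inl ⟨r2, hτr, by linarith, by linarith⟩
      · have hτr : τ = ((r3 : ℝ) : ℂ) := by
          rw [← Complex.conj_conj τ, hcin, Complex.conj_ofReal]
        exact Or.inl ⟨r3, hτr, by linarith, by linarith⟩
      · have hτr : τ = ((r4 : ℝ) : ℂ) := by
          rw [← Complex.conj_conj τ, hcin, Complex.conj_ofReal]
        exact Or.inl ⟨r4, hτr, by linarith, by linarith⟩
      · have hτr : τ = ((r5 : ℝ) : ℂ) := by
          rw [← Complex.conj_conj τ, hcin, Complex.conj_ofReal]
        exact Or.inl ⟨r5, hτr, by linarith, by linarith⟩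
      · have hτr : τ = ((r6 : ℝ) : ℂ) := by
          rw [← Complex.conj_conj τ, hcin, Complex.conj_ofReal]
        exact Or.inl ⟨r6, hτr, by linarith, by linarith⟩
      · have hτr : τ = ((r7 : ℝ) : ℂ) := by
          rw [← Complex.conj_conj τ, hcin, Complex.conj_ofReal]
        exact Or.inl ⟨r7, hτr, by linarith, by linarith⟩
      · have hτr : τ = ((r8 : ℝ) : ℂ) := by
          rw [← Complex.conj_conj τ, hcin, Complex.conj_ofReal]
        exact Or.inl ⟨r8, hτr, by linarith, by linarith⟩
      · have hτr : τ = ((r9 : ℝ) : ℂ) := by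
          rw [← Complex.conj_conj τ, hcin, Complex.conj_ofReal]
        exact Or.inr (Or.inl ⟨r9, hτr, by linarith⟩)
    · simp only [Multiset.insert_eq_cons, Multiset.mem_cons, Multiset.mem_singleton] at hcin
      rcases hcin with hcτ | hcσ
      · -- conj τ = τ : τ real, so the remaining pair is real: contradiction with Vieta
        exfalso
        have hxτ : ((τ.re : ℝ) : ℂ) = τ := Complex.conj_eq_iff_re.mp hcτ
        have hσmem : σ ∈ pC.roots := by
          rw [hT']
          simp [Multiset.insert_eq_cons]
        have hconjσ : (starRingEnd ℂ) σ ∈ pC.roots := by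
          rw [mem_roots']
          refine ⟨pC_monic.ne_zero, ?_⟩
          show pC.eval ((starRingEnd ℂ) σ) = 0
          rw [pC_eval_conj, (mem_roots'.mp hσmem).2, map_zero]
        rw [hT', Multiset.mem_add] at hconjσ
        have hσreal : ∃ y : ℝ, ((y : ℝ) : ℂ) = σ := by
          rcases hconjσ with hc | hc
          · simp only [hS, Multiset.insert_eq_cons, Multiset.mem_cons,
              Multiset.mem_singleton] at hc
            rcases hc with hc|hc|hc|hc|hc|hc|hc|hc|hc <;>
              exact ⟨_, by rw [← Complex.conj_conj σ, hc, Complex.conj_ofReal]⟩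
          · simp only [Multiset.insert_eq_cons, Multiset.mem_cons,
              Multiset.mem_singleton] at hc
            rcases hc with hc | hc
            · refine ⟨τ.re, ?_⟩
              rw [← Complex.conj_conj σ, hc]
              conv_rhs => rw [← hxτ]
              rw [Complex.conj_ofReal]
            · exact ⟨σ.re, Complex.conj_eq_iff_re.mp hc⟩
        obtain ⟨y, hy⟩ := hσreal
        have hsumR : (r1+r2+r3+r4+r5+r6+r7+r8+r9) + (τ.re + y) = 0 := by
          have h' := hsumC
          rw [hSsum, ← hxτ, ← hy] at h'
          exact_mod_cast h'
        have hprodR : (r1 * r2 * r3 * r4 * r5 * r6 * r7 * r8 * r9) * (τ.re * y) = -4 := by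
          have h' := hprodC
          rw [hSprod, ← hxτ, ← hy] at h'
          exact_mod_cast h'
        exact real_pair_absurd _ _ _ _ hslo hshi hplo hphi hsumR hprodR
      · -- σ = conj τ : the conjugate pair case
        right; right
        have hsum2 : ((r1+r2+r3+r4+r5+r6+r7+r8+r9 : ℝ) : ℂ) + ((2 * τ.re : ℝ) : ℂ) = 0 := by
          have h' := hsumC
          rw [hSsum, ← hcσ, Complex.add_conj] at h'
          push_cast at h' ⊢
          linear_combination h'
        have hprod2 : ((r1 * r2 * r3 * r4 * r5 * r6 * r7 * r8 * r9 : ℝ) : ℂ) * ((Complex.normSq τ : ℝ) : ℂ) = -4 := by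
          have h' := hprodC
          rw [hSprod, ← hcσ, Complex.mul_conj] at h'
          exact h'
        have hsumR : (r1+r2+r3+r4+r5+r6+r7+r8+r9) + 2 * τ.re = 0 := by exact_mod_cast hsum2
        have hprodR : (r1 * r2 * r3 * r4 * r5 * r6 * r7 * r8 * r9) * Complex.normSq τ = -4 := by exact_mod_cast hprod2
        exact conj_pair_bounds _ _ _ _ _ hslo hshi hplo hphi hsumR hprodR
          (by rw [Complex.normSq_apply]; ring) (Complex.normSq_nonneg τ)
set_option maxHeartbeats 1000000 in
lemma no_root_helper (a b N tre tim : ℝ) (hN : 0 < N) (hab : a ^ 2 + b ^ 2 = N)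
    (hu : tre * N = a * (N + 1)) (hv : tim * N = b * (N - 1))
    (hre : tre ^ 2 ≤ 2.87) (him : tim ^ 2 ≤ 0.017)
    (hrange : (1.96173 : ℝ) ≤ N ∨ N ≤ (0.50976 : ℝ)) : False := by
  have hu2 : tre ^ 2 * N ^ 2 = a ^ 2 * (N + 1) ^ 2 := by
    linear_combination (tre * N + a * (N + 1)) * hu
  have hv2 : tim ^ 2 * N ^ 2 = b ^ 2 * (N - 1) ^ 2 := by
    linear_combination (tim * N + b * (N - 1)) * hv
  have hE : tim ^ 2 * N ^ 2 * (N + 1) ^ 2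
      = N * (N - 1) ^ 2 * (N + 1) ^ 2 - tre ^ 2 * N ^ 2 * (N - 1) ^ 2 := by
    linear_combination (N + 1) ^ 2 * hv2 + (N - 1) ^ 2 * hu2 + (N - 1) ^ 2 * (N + 1) ^ 2 * hab
  have hq : 0 ≤ N ^ 2 - 2.4712 * N + 1 := by
    rcases hrange with hr | hr
    · linarith [mul_nonneg (by linarith : (0:ℝ) ≤ N - 1.96173)
        (by linarith : (0:ℝ) ≤ N - 0.50983)]
    · linarith [mul_nonneg (by linarith : (0:ℝ) ≤ 0.50976 - N)
        (by linarith : (0:ℝ) ≤ 1.9614 - N), hN.le]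
  have hA' : 4.4712 * N ^ 2 ≤ N * (N + 1) ^ 2 := by linarith [mul_nonneg hq hN.le]
  have hB' : tre ^ 2 * N ^ 2 ≤ 2.87 * N ^ 2 := by
    linarith [mul_nonneg (by linarith : (0:ℝ) ≤ 2.87 - tre ^ 2) (sq_nonneg N)]
  have hC' : 1.6012 * (N ^ 2 * (N - 1) ^ 2)
      ≤ (N * (N + 1) ^ 2 - tre ^ 2 * N ^ 2) * (N - 1) ^ 2 := by
    linarith [mul_nonneg
      (by linarith : (0:ℝ) ≤ N * (N + 1) ^ 2 - tre ^ 2 * N ^ 2 - 1.6012 * N ^ 2)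
      (sq_nonneg (N - 1))]
  have hD : 0.0171 * (N + 1) ^ 2 ≤ 1.6012 * (N - 1) ^ 2 := by
    rcases hrange with hr | hr
    · linarith [mul_nonneg (by linarith : (0:ℝ) ≤ N - 1.24) (by linarith : (0:ℝ) ≤ N - 0.81)]
    · linarith [mul_nonneg (by linarith : (0:ℝ) ≤ 0.8125 - N)
        (by linarith : (0:ℝ) ≤ 1.2302 - N), hN.le]
  have hD2 : 0.0171 * (N ^ 2 * (N + 1) ^ 2) ≤ 1.6012 * (N ^ 2 * (N - 1) ^ 2) := by
    linarith [mul_nonneg (by linarith : (0:ℝ) ≤ 1.6012 * (N - 1) ^ 2 - 0.0171 * (N + 1) ^ 2)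
      (sq_nonneg N)]
  have hEim : tim ^ 2 * (N ^ 2 * (N + 1) ^ 2) ≤ 0.017 * (N ^ 2 * (N + 1) ^ 2) := by
    linarith [mul_nonneg (by linarith : (0:ℝ) ≤ 0.017 - tim ^ 2)
      (mul_nonneg (sq_nonneg N) (sq_nonneg (N + 1)))]
  have hpos : 0 < N ^ 2 * (N + 1) ^ 2 := by positivity
  linarith [hE, hC', hD2, hEim, hpos]
lemma Q_recip (mu : ℝ) (hmu : mu ≠ 0) (h : (aeval mu) Qpoly = 0) :
    (aeval (1 / mu)) Qpoly = 0 := by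
  have hiden : (aeval (1 / mu)) Qpoly * mu ^ 22 = (aeval mu) Qpoly := by
    simp only [Qpoly, map_add, map_sub, map_pow, map_one, aeval_X]
    field_simp
    ring
  rw [h] at hiden
  exact (mul_eq_zero.mp hiden).resolve_right (pow_ne_zero _ hmu)

lemma Q_cast (r : ℝ) : (aeval ((r : ℝ) : ℂ)) Qpoly = (((aeval r Qpoly : ℝ)) : ℂ) := by
  simp only [Qpoly, map_add, map_sub, map_pow, map_one, aeval_X]
  push_cast
  ring

set_option maxHeartbeats 1000000 in
theorem Qpoly_root_moduli (lam : ℝ)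
    (hroot : (aeval lam) Qpoly = 0)
    (hlb : (1.400618 : ℝ) < lam) (hub : lam < (1.400619 : ℝ))
    (hmax : ∀ μ : ℝ, (aeval μ) Qpoly = 0 → μ ≤ lam) :
    (∀ ρ : ℂ, (aeval ρ) Qpoly = 0 → 1 / lam ≤ ‖ρ‖ ∧ ‖ρ‖ ≤ lam) ∧
    (aeval (1 / lam)) Qpoly = 0 ∧
    IsLeast {r : ℝ | ∃ ρ : ℂ, (aeval ρ) Qpoly = 0 ∧ ‖ρ‖ = r} (1 / lam) ∧
    IsGreatest {r : ℝ | ∃ ρ : ℂ, (aeval ρ) Qpoly = 0 ∧ ‖ρ‖ = r} lam := by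
  have hlam0 : (0 : ℝ) < lam := by norm_num at hlb ⊢; linarith
  have B : ∀ ρ : ℂ, (aeval ρ) Qpoly = 0 → 1 / lam ≤ ‖ρ‖ ∧ ‖ρ‖ ≤ lam := by
    intro ρ h
    have hρ0 : ρ ≠ 0 := by
      rintro rfl
      simp only [Qpoly, map_add, map_sub, map_pow, map_one, aeval_X] at h
      norm_num at h
    have hN : 0 < Complex.normSq ρ := Complex.normSq_pos.mpr hρ0
    have hNe : ρ.re ^ 2 + ρ.im ^ 2 = Complex.normSq ρ := by
      rw [Complex.normSq_apply]; ring
    have hA2 : (‖ρ‖) ^ 2 = Complex.normSq ρ := Complex.sq_norm ρ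
    have hA0 : 0 ≤ ‖ρ‖ := norm_nonneg _
    have hτ0 : pC.eval (ρ + ρ⁻¹) = 0 := by
      have hk := key_identity ρ hρ0
      rw [h] at hk
      exact (mul_eq_zero.mp hk.symm).resolve_left (pow_ne_zero 11 hρ0)
    have hre' : (ρ + ρ⁻¹).re = ρ.re + ρ.re / Complex.normSq ρ := by
      simp only [Complex.add_re, Complex.inv_re]
    have him' : (ρ + ρ⁻¹).im = ρ.im - ρ.im / Complex.normSq ρ := by
      simp only [Complex.add_im, Complex.inv_im]
      ring
    rcases classify _ hτ0 with ⟨x, hx, hx1, hx2⟩ | ⟨x, hx, hx2⟩ | ⟨hre, him⟩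
    · -- real trace in (-2,2): ρ is on the unit circle
      have him0 : ρ.im - ρ.im / Complex.normSq ρ = 0 := by
        rw [← him', hx, Complex.ofReal_im]
      have hb : ρ.im * (Complex.normSq ρ - 1) = 0 := by
        have h2 : ρ.im * (Complex.normSq ρ - 1)
            = (ρ.im - ρ.im / Complex.normSq ρ) * Complex.normSq ρ := by
          field_simp
        rw [him0, zero_mul] at h2
        exact h2
      have hxx : x = ρ.re + ρ.re / Complex.normSq ρ := by
        rw [← hre', hx, Complex.ofReal_re]
      rcases mul_eq_zero.mp hb with hb0 | hN1
      · exfalso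
        have hNa : Complex.normSq ρ = ρ.re ^ 2 := by rw [← hNe, hb0]; ring
        have ha0 : ρ.re ≠ 0 := by
          intro h0
          rw [hNa, h0] at hN
          norm_num at hN
        have hxa : x * ρ.re = ρ.re ^ 2 + 1 := by
          rw [hxx, hNa]
          field_simp
        rcases lt_or_gt_of_ne ha0 with hneg | hpos
        · nlinarith [sq_nonneg (ρ.re + 1),
            mul_pos (by linarith : (0:ℝ) < -ρ.re) (by linarith : (0:ℝ) < x + 2)]
        · nlinarith [sq_nonneg (ρ.re - 1),
            mul_pos hpos (by linarith : (0:ℝ) < 2 - x)]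
      · have hN1' : Complex.normSq ρ = 1 := by linarith
        have h2 : (‖ρ‖) ^ 2 = 1 := by rw [hA2, hN1']
        have h3 : (‖ρ‖ - 1) * (‖ρ‖ + 1) = 0 := by linear_combination h2
        rcases mul_eq_zero.mp h3 with h4 | h4
        · have hA1 : ‖ρ‖ = 1 := by linarith
          rw [hA1]
          constructor
          · rw [div_le_one hlam0]; linarith
          · linarith
        · exfalso; linarith
    · -- real trace > 2 : ρ is a positive real root of Q
      have him0 : ρ.im - ρ.im / Complex.normSq ρ = 0 := by
        rw [← him', hx, Complex.ofReal_im]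
      have hb : ρ.im * (Complex.normSq ρ - 1) = 0 := by
        have h2 : ρ.im * (Complex.normSq ρ - 1)
            = (ρ.im - ρ.im / Complex.normSq ρ) * Complex.normSq ρ := by
          field_simp
        rw [him0, zero_mul] at h2
        exact h2
      have hxx : x = ρ.re + ρ.re / Complex.normSq ρ := by
        rw [← hre', hx, Complex.ofReal_re]
      rcases mul_eq_zero.mp hb with hb0 | hN1
      · obtain ⟨u, hu⟩ : ∃ u : ℝ, ρ = ((u : ℝ) : ℂ) :=
          ⟨ρ.re, Complex.ext (by simp) (by simpa using hb0)⟩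
        have hru : ρ.re = u := by rw [hu, Complex.ofReal_re]
        have hNu : Complex.normSq ρ = u ^ 2 := by
          rw [hu, Complex.normSq_ofReal]; ring
        have hu0 : u ≠ 0 := by
          intro h0
          rw [hNu, h0] at hN
          norm_num at hN
        have hxa : x * u = u ^ 2 + 1 := by
          rw [hxx, hru, hNu]
          field_simp
        have hupos : 0 < u := by
          rcases lt_or_gt_of_ne hu0 with hneg | hpos
          · exfalso
            nlinarith [mul_pos (by linarith : (0:ℝ) < x) (by linarith : (0:ℝ) < -u),
              sq_nonneg u]
          · exact hpos
        have hQu : (aeval u) Qpoly = 0 := by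
          have h' := h
          rw [hu, Q_cast] at h'
          exact_mod_cast h'
        have h1 := hmax _ hQu
        have h2 := hmax _ (Q_recip u hu0 hQu)
        have hAu : ‖ρ‖ = u := by
          rw [hu, Complex.norm_real, Real.norm_eq_abs, abs_of_pos hupos]
        rw [hAu]
        constructor
        · have h3 : 1 ≤ lam * u := (div_le_iff₀ hupos).mp h2
          rw [div_le_iff₀ hlam0]
          linarith
        · exact h1
      · exfalso
        have hN1' : Complex.normSq ρ = 1 := by linarith
        rw [hN1'] at hxx
        nlinarith [hNe, hN1', sq_nonneg ρ.im]
    · -- the complex trace pair: moduli squeezed between 1/lam and lam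
      have hu : (ρ + ρ⁻¹).re * Complex.normSq ρ = ρ.re * (Complex.normSq ρ + 1) := by
        rw [hre']
        field_simp
      have hv : (ρ + ρ⁻¹).im * Complex.normSq ρ = ρ.im * (Complex.normSq ρ - 1) := by
        rw [him']
        field_simp
      constructor
      · by_contra hc
        push_neg at hc
        have h1l : (1 : ℝ) / lam < 0.713971 := by
          rw [div_lt_iff₀ hlam0]
          nlinarith
        have hNhi : Complex.normSq ρ ≤ 0.50976 := by
          nlinarith [hA2, hA0, hc, h1l]
        exact no_root_helper _ _ _ _ _ hN hNe hu hv hre him (Or.inr hNhi)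
      · by_contra hc
        push_neg at hc
        have hNlo : (1.96173 : ℝ) ≤ Complex.normSq ρ := by
          nlinarith [hA2, hc, hlb, hA0]
        exact no_root_helper _ _ _ _ _ hN hNe hu hv hre him (Or.inl hNlo)
  refine ⟨B, Q_recip lam (ne_of_gt hlam0) hroot, ⟨?_, ?_⟩, ⟨?_, ?_⟩⟩
  · refine ⟨(((1 / lam : ℝ)) : ℂ), ?_, ?_⟩
    · rw [Q_cast, Q_recip lam (ne_of_gt hlam0) hroot]
      norm_num
    · rw [Complex.norm_real, Real.norm_eq_abs]
      exact abs_of_pos (by positivity)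
  · rintro r ⟨ρ, hρ, rfl⟩
    exact (B ρ hρ).1
  · refine ⟨((lam : ℝ) : ℂ), ?_, ?_⟩
    · rw [Q_cast, hroot]
      norm_num
    · rw [Complex.norm_real, Real.norm_eq_abs]
      exact abs_of_pos hlam0
  · rintro r ⟨ρ, hρ, rfl⟩
    exact (B ρ hρ).2
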